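/- For an acyclic join graph, taking the junction tree with one bag per relation, the absorption result at each bag after calibration has support bounded by the size of the corresponding base relation; hence calibration of an acyclic join of r relations of size at most n produces at most 2(r−1) messages each of support at most n. -/
import Mathlib


open Finset

variable {Att : Type*} [Fintype Att] [DecidableEq Att]
variable {Val : Att → Type*} [∀ a, Fintype (Val a)] [∀ a, DecidableEq (Val a)]
variable {D : Type*} [CommSemiring D]

/-- `R` depends only on the attributes in schema `S`. -/
def DependsOnlyOn (R : (∀ a, Val a) → D) (S : Finset Att) : Prop :=
  ∀ t₁ t₂ : ∀ a, Val a, (∀ a ∈ S, t₁ a = t₂ a) → R t₁ = R t₂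

/-- Join of annotated relations: multiply the annotations. -/
def joinRel (R T : (∀ a, Val a) → D) : (∀ a, Val a) → D := fun t => R t * T t

/-- Marginalize out a single attribute `A`: sum over all values of `A`. -/
def marg (A : Att) (R : (∀ a, Val a) → D) : (∀ a, Val a) → D :=
  fun t => ∑ v : Val A, R (Function.update t A v)

/-- Marginalize out all attributes in `E`. -/
def margOver (E : Finset Att) (R : (∀ a, Val a) → D) : (∀ a, Val a) → D :=
  fun t => ∑ s : ∀ a, Val a, if ∀ a, a ∉ E → s a = t a then R s else 0

variable {V : Type*} [Fintype V] [DecidableEq V]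

/-- `w` lies in the subtree rooted at `u` away from `v`: there is a walk from
`w` to `u` that avoids `v`. -/
def InSubtree (G : SimpleGraph V) (u v w : V) : Prop :=
  ∃ p : G.Walk w u, v ∉ p.support

/-- The running intersection property: if an attribute belongs to two bags then
it belongs to every bag on the path between them. -/
def RunningIntersection (G : SimpleGraph V) (bag : V → Finset Att) : Prop :=
  ∀ (a : Att) (u v : V) (p : G.Walk u v), p.IsPath →
    a ∈ bag u → a ∈ bag v → ∀ w ∈ p.support, a ∈ bag w

/-- `M` is a message system for the junction tree `(G, bag)` with local
relations `L`: the message `u → v` marginalizes, onto the attributes shared by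
`u` and `v`, the join of `u`'s local relation with all incoming messages from
`u`'s neighbors other than `v`. -/
def MsgSystem (G : SimpleGraph V) [DecidableRel G.Adj] (bag : V → Finset Att)
    (L : V → (∀ a, Val a) → D) (M : V → V → (∀ a, Val a) → D) : Prop :=
  ∀ u v, G.Adj u v →
    M u v = margOver (bag u \ bag v)
      (fun t => L u t * ∏ w ∈ (G.neighborFinset u).erase v, M w u t)

/-- Absorption at a bag: join of its local relation with all incoming messages. -/
def absorb (G : SimpleGraph V) [DecidableRel G.Adj]
    (L : V → (∀ a, Val a) → D) (M : V → V → (∀ a, Val a) → D) (v : V) :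
    (∀ a, Val a) → D :=
  fun t => L v t * ∏ w ∈ G.neighborFinset v, M w v t

/-- Number of distinct tuples, projected onto schema `S`, on which `R` is
nonzero (the size of the support of `R` as a relation over `S`). -/
def suppCard [DecidableEq D] (R : (∀ a, Val a) → D) (S : Finset Att) : ℕ :=
  ((Finset.univ.filter (fun t : ∀ a, Val a => R t ≠ 0)).image
      (fun t => fun a : {a // a ∈ S} => t a.1)).card

/-- For an acyclic join graph, with the junction tree having one bag per
relation (each local relation of support at most `n`), the absorption at each
bag after calibration has support bounded by the support of its base relation,
every one of the messages has support at most `n`, and calibration of a tree of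
`r` bags produces exactly `2 (r - 1)` (directed) messages. -/
theorem acyclic_calibration_support [DecidableEq D]
    (G : SimpleGraph V) [DecidableRel G.Adj]
    (hG : G.IsTree) (bag : V → Finset Att)
    (hRI : RunningIntersection G bag)
    (L : V → (∀ a, Val a) → D)
    (hL : ∀ v, DependsOnlyOn (L v) (bag v))
    (M : V → V → (∀ a, Val a) → D) (hM : MsgSystem G bag L M)
    (n : ℕ) (hn : ∀ v, suppCard (L v) (bag v) ≤ n) :
    (∀ v, suppCard (absorb G L M v) (bag v) ≤ suppCard (L v) (bag v)) ∧
      (∀ u v, G.Adj u v → suppCard (M u v) (bag u ∩ bag v) ≤ n) ∧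
      (Finset.univ.filter (fun p : V × V => G.Adj p.1 p.2)).card =
        2 * (Fintype.card V - 1) := by
  refine ⟨?_, ?_, ?_⟩
  · intro v
    apply Finset.card_le_card
    apply Finset.image_subset_image
    intro t ht
    simp only [Finset.mem_filter, Finset.mem_univ, true_and] at ht ⊢
    intro hLz
    apply ht
    simp [absorb, hLz]
  · intro u v huv
    refine le_trans ?_ (hn u)
    unfold suppCard
    set restrict : (∀ a : {a // a ∈ bag u}, Val a) → (∀ a : {a // a ∈ bag u ∩ bag v}, Val a) :=
      fun f a => f ⟨a.1, (Finset.mem_inter.mp a.2).1⟩ with hres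
    calc ((Finset.univ.filter (fun t : ∀ a, Val a => M u v t ≠ 0)).image
            (fun t => fun a : {a // a ∈ bag u ∩ bag v} => t a.1)).card
        ≤ (((Finset.univ.filter (fun t : ∀ a, Val a => L u t ≠ 0)).image
            (fun t => fun a : {a // a ∈ bag u} => t a.1)).image restrict).card := by
          apply Finset.card_le_card
          intro x hx
          simp only [Finset.mem_image, Finset.mem_filter, Finset.mem_univ, true_and] at hx ⊢
          obtain ⟨t, hMt, rfl⟩ := hx
          rw [hM u v huv] at hMt
          unfold margOver at hMt
          obtain ⟨s, -, hs⟩ := Finset.exists_ne_zero_of_sum_ne_zero hMt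
          by_cases hc : ∀ a, a ∉ bag u \ bag v → s a = t a
          · rw [if_pos hc] at hs
            have hLs : L u s ≠ 0 := fun h => hs (by simp [h])
            refine ⟨fun a : {a // a ∈ bag u} => s a.1, ⟨s, hLs, rfl⟩, ?_⟩
            funext a
            have ha := a.2
            rw [Finset.mem_inter] at ha
            exact hc a.1 (fun h => (Finset.mem_sdiff.mp h).2 ha.2)
          · rw [if_neg hc] at hs; exact absurd rfl hs
      _ ≤ _ := Finset.card_image_le
  · have hcard : (Finset.univ.filter (fun p : V × V => G.Adj p.1 p.2)).card
        = Fintype.card G.Dart := by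
      rw [← Fintype.card_coe]
      refine Fintype.card_congr ?_
      refine ⟨fun p => ⟨p.1, (Finset.mem_filter.mp p.2).2⟩,
        fun d => ⟨d.toProd, Finset.mem_filter.mpr ⟨Finset.mem_univ _, d.adj⟩⟩, ?_, ?_⟩
      · intro p; ext <;> rfl
      · intro d; rfl
    rw [hcard, G.dart_card_eq_twice_card_edges]
    have := hG.card_edgeFinset
    omega
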